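/- arXiv:1003.0929 — 3 statements merged into one kernel-verified Lean document; each statement's English description precedes it below -/
import Mathlib

section
/- Suppose the system is critically loaded (Leff(ρ) = 1). Let (n,q) ∈ ℝ₊^ℱ × ℝ₊^ℰ and T > 0, and suppose there exists an MWUM-α fluid model solution on [0,T] whose flow-count and queue-length components satisfy (n(t), q(t)) = (n,q) for all t ∈ [0,T]. Then (Γρ)ᵀ q^α = max_{π∈𝒮} πᵀ(I − R) q^α (where q^α is the componentwise α-th power), and n_f = ρ_f q_{ι(f)} for all f ∈ ℱ. -/
open Matrix Filter
open Topology

/-- Network data: queues `E`, flow types `F`, routing matrix, schedule set,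
ingress map, arrival/departure parameters. -/
structure Network (E F : Type*) [Fintype E] [Fintype F] [DecidableEq E] where
  R : Matrix E E ℝ
  S : Finset (E → ℝ)
  iota : F → E
  ν : F → ℝ
  μ : F → ℝ
  C : ℝ
  hR01 : ∀ e e', R e e' = 0 ∨ R e e' = 1
  hRrow : ∀ e e₁ e₂, R e e₁ ≠ 0 → R e e₂ ≠ 0 → e₁ = e₂
  hRnil : IsNilpotent R
  hS01 : ∀ σ ∈ S, ∀ e, σ e = 0 ∨ σ e = 1
  hS0 : (0 : E → ℝ) ∈ S
  hSmono : ∀ σ ∈ S, ∀ σ' : E → ℝ, (∀ e, σ' e = 0 ∨ σ' e = 1) → (∀ e, σ' e ≤ σ e) → σ' ∈ S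
  hSsingle : ∀ e : E, (fun e' => if e' = e then (1 : ℝ) else 0) ∈ S
  hν : ∀ f, 0 < ν f
  hμ0 : ∀ f, 0 < μ f
  hμ1 : ∀ f, μ f < 1
  hC : ∀ f, ν f / μ f < C

namespace Network

variable {E F : Type*} [Fintype E] [Fintype F] [DecidableEq E] (N : Network E F)

/-- offered load `ρ_f = ν_f / μ_f`. -/
noncomputable def rho : F → ℝ := fun f => N.ν f / N.μ f

/-- `Ξ = (I - Rᵀ)⁻¹`. -/
noncomputable def Xi : Matrix E E ℝ := (1 - N.R.transpose)⁻¹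

/-- ingress matrix `Γ`. -/
noncomputable def Gam : Matrix E F ℝ := Matrix.of fun e f => if N.iota f = e then (1 : ℝ) else 0

/-- implied load `λ = Ξ Γ ρ`. -/
noncomputable def lamv : E → ℝ := N.Xi *ᵥ (N.Gam *ᵥ N.rho)

/-- `Π s`, the vector of service rates induced by schedule weights `s`. -/
def PiV (s : (E → ℝ) → ℝ) : E → ℝ := fun e => ∑ σ ∈ N.S, s σ * σ e

/-- the primal LP value `PRIMAL(l)`. -/
noncomputable def PRIMAL (l : E → ℝ) : ℝ :=
  sInf { v | ∃ s : (E → ℝ) → ℝ, (∀ σ, 0 ≤ s σ) ∧ (∀ e, l e ≤ N.PiV s e) ∧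
    v = ∑ σ ∈ N.S, s σ }

/-- effective load `Leff(ρ) = PRIMAL(ΞΓρ)`. -/
noncomputable def Leff : ℝ := N.PRIMAL N.lamv

/-- feasibility for the dual LP. -/
def dualFeasible (ζ : E → ℝ) : Prop :=
  (∀ e, 0 ≤ ζ e) ∧ ∀ σ ∈ N.S, ∑ e, ζ e * σ e ≤ 1

/-- the dual LP value `DUAL(l)`. -/
noncomputable def DUAL (l : E → ℝ) : ℝ :=
  sSup { v | ∃ ζ : E → ℝ, N.dualFeasible ζ ∧ v = ∑ e, l e * ζ e }

/-- `CR(ρ)`: the critical virtual resources (optimal solutions of `DUAL(ΞΓρ)`). -/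
def CR : Set (E → ℝ) :=
  { ζ | N.dualFeasible ζ ∧ ∑ e, N.lamv e * ζ e = N.DUAL N.lamv }

/-- `CR*(ρ)`: extreme points of `CR(ρ)`. -/
noncomputable def CRstar : Set (E → ℝ) := Set.extremePoints ℝ N.CR

/-- workload `w_ζ(n,q) = ζᵀ Ξ [q + Γ diag(μ)⁻¹ n]`. -/
noncomputable def workload (ζ : E → ℝ) (n : F → ℝ) (q : E → ℝ) : ℝ :=
  ∑ e, ζ e * (N.Xi *ᵥ (q + N.Gam *ᵥ fun f => n f / N.μ f)) e

/-- cost `c(n,q) = Σ_f n_f/μ_f + Σ_e q_e`. -/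
noncomputable def cost (n : F → ℝ) (q : E → ℝ) : ℝ :=
  ∑ f, n f / N.μ f + ∑ e, q e

/-- Lyapunov function `L_α(n,q)`. -/
noncomputable def Lyap (α : ℝ) (n : F → ℝ) (q : E → ℝ) : ℝ :=
  ∑ f, n f ^ (1 + α) / (N.μ f * N.rho f ^ α) + ∑ e, q e ^ (1 + α)

/-- back-pressure weight of a schedule `σ`: `σᵀ (I - R) q^α`. -/
noncomputable def weight (α : ℝ) (q : E → ℝ) (σ : E → ℝ) : ℝ :=
  ∑ e, σ e * ((1 - N.R) *ᵥ fun e' => q e' ^ α) e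

theorem S_nonempty : N.S.Nonempty := ⟨0, N.hS0⟩

/-- the maximum back-pressure weight. -/
noncomputable def maxWeight (α : ℝ) (q : E → ℝ) : ℝ :=
  N.S.sup' N.S_nonempty (N.weight α q)

/-- feasibility for problem `bALGD(n,q)`. -/
def bALGDFeas (n : F → ℝ) (q : E → ℝ) (p : (F → ℝ) × (E → ℝ)) : Prop :=
  (∀ f, 0 ≤ p.1 f) ∧ (∀ e, 0 ≤ p.2 e) ∧
    ∀ ζ ∈ N.CRstar, N.workload ζ n q ≤ N.workload ζ p.1 p.2

/-- optimality for problem `bALGD(n,q)`. -/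
def bALGDOpt (α : ℝ) (n : F → ℝ) (q : E → ℝ) (p : (F → ℝ) × (E → ℝ)) : Prop :=
  N.bALGDFeas n q p ∧ ∀ p', N.bALGDFeas n q p' → N.Lyap α p.1 p.2 ≤ N.Lyap α p'.1 p'.2

/-- the lifting map `Δ`: the unique optimal solution of `bALGD(n,q)`. -/
noncomputable def lift (α : ℝ) (p : (F → ℝ) × (E → ℝ)) : (F → ℝ) × (E → ℝ) :=
  letI := Classical.dec (∃! p', N.bALGDOpt α p.1 p.2 p')
  if h : ∃! p', N.bALGDOpt α p.1 p.2 p' then h.choose else p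

/-- the effective cost `c*(n,q)`. -/
noncomputable def effCost (n : F → ℝ) (q : E → ℝ) : ℝ :=
  sInf { v | ∃ p : (F → ℝ) × (E → ℝ), N.bALGDFeas n q p ∧ v = N.cost p.1 p.2 }

/-- the balance factor `γ(ρ)`. -/
noncomputable def balance : ℝ :=
  sInf { v | ∃ (n : F → ℝ) (q : E → ℝ) (p : (F → ℝ) × (E → ℝ)),
    (∀ f, 0 ≤ n f) ∧ (∀ e, 0 ≤ q e) ∧ N.bALGDFeas n q p ∧ N.cost n q = 1 ∧
    v = N.cost p.1 p.2 }

/-- the scheduling capacity region `Λ`. -/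
def LamSet : Set (E → ℝ) :=
  { l | (∀ e, 0 ≤ l e) ∧ ∃ s : (E → ℝ) → ℝ, (∀ σ, 0 ≤ s σ) ∧
    (∀ e, l e ≤ N.PiV s e) ∧ ∑ σ ∈ N.S, s σ ≤ 1 }

end Network

/-- ℓ1-distance between two states. -/
noncomputable def dist1 {E F : Type*} [Fintype E] [Fintype F]
    (p p' : (F → ℝ) × (E → ℝ)) : ℝ :=
  ∑ f, |p.1 f - p'.1 f| + ∑ e, |p.2 e - p'.2 e|

/-- A fluid model solution on `[0,T]` (algorithm-independent equations (F1)-(F8)). -/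
structure FMS {E F : Type*} [Fintype E] [Fintype F] [DecidableEq E]
    (N : Network E F) (T : ℝ) where
  q : ℝ → E → ℝ
  z : ℝ → E → ℝ
  n : ℝ → F → ℝ
  s : ℝ → (E → ℝ) → ℝ
  xbar : ℝ → F → ℝ
  fa : ℝ → F → ℝ
  d : ℝ → F → ℝ
  a : ℝ → F → ℝ
  lip_q : ∀ e, ∃ K : NNReal, LipschitzOnWith K (fun t => q t e) (Set.Icc 0 T)
  lip_z : ∀ e, ∃ K : NNReal, LipschitzOnWith K (fun t => z t e) (Set.Icc 0 T)
  lip_n : ∀ f, ∃ K : NNReal, LipschitzOnWith K (fun t => n t f) (Set.Icc 0 T)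
  lip_s : ∀ σ, ∃ K : NNReal, LipschitzOnWith K (fun t => s t σ) (Set.Icc 0 T)
  lip_xbar : ∀ f, ∃ K : NNReal, LipschitzOnWith K (fun t => xbar t f) (Set.Icc 0 T)
  lip_fa : ∀ f, ∃ K : NNReal, LipschitzOnWith K (fun t => fa t f) (Set.Icc 0 T)
  lip_d : ∀ f, ∃ K : NNReal, LipschitzOnWith K (fun t => d t f) (Set.Icc 0 T)
  lip_a : ∀ f, ∃ K : NNReal, LipschitzOnWith K (fun t => a t f) (Set.Icc 0 T)
  nonneg_q : ∀ t ∈ Set.Icc 0 T, ∀ e, 0 ≤ q t e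
  nonneg_z : ∀ t ∈ Set.Icc 0 T, ∀ e, 0 ≤ z t e
  nonneg_n : ∀ t ∈ Set.Icc 0 T, ∀ f, 0 ≤ n t f
  nonneg_s : ∀ t ∈ Set.Icc 0 T, ∀ σ, 0 ≤ s t σ
  supp_s : ∀ t ∈ Set.Icc 0 T, ∀ σ ∉ N.S, s t σ = 0
  nonneg_xbar : ∀ t ∈ Set.Icc 0 T, ∀ f, 0 ≤ xbar t f
  nonneg_fa : ∀ t ∈ Set.Icc 0 T, ∀ f, 0 ≤ fa t f
  nonneg_d : ∀ t ∈ Set.Icc 0 T, ∀ f, 0 ≤ d t f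
  nonneg_a : ∀ t ∈ Set.Icc 0 T, ∀ f, 0 ≤ a t f
  eq_n : ∀ t ∈ Set.Icc 0 T, ∀ f, n t f = n 0 f + fa t f - d t f
  eq_fa : ∀ t ∈ Set.Icc 0 T, ∀ f, fa t f = N.ν f * t
  eq_d : ∀ t ∈ Set.Icc 0 T, ∀ f, d t f = N.μ f * xbar t f
  eq_q : ∀ t ∈ Set.Icc 0 T, ∀ e, q t e = q 0 e
      - ((1 - N.R.transpose) *ᵥ N.PiV (s t)) e
      + ((1 - N.R.transpose) *ᵥ z t) e
      + (N.Gam *ᵥ a t) e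
  eq_a : ∀ t ∈ Set.Icc 0 T, ∀ f, a t f = xbar t f
  eq_s : ∀ t ∈ Set.Icc 0 T, ∑ σ ∈ N.S, s t σ = t
  mono_z : ∀ t₁ ∈ Set.Icc 0 T, ∀ t₂ ∈ Set.Icc 0 T, t₁ ≤ t₂ → ∀ e, z t₁ e ≤ z t₂ e
  mono_s : ∀ t₁ ∈ Set.Icc 0 T, ∀ t₂ ∈ Set.Icc 0 T, t₁ ≤ t₂ → ∀ σ, s t₁ σ ≤ s t₂ σ
  mono_xbar : ∀ t₁ ∈ Set.Icc 0 T, ∀ t₂ ∈ Set.Icc 0 T, t₁ ≤ t₂ → ∀ f, xbar t₁ f ≤ xbar t₂ f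

namespace FMS

variable {E F : Type*} [Fintype E] [Fintype F] [DecidableEq E] {N : Network E F} {T : ℝ}

/-- a regular point: all components are differentiable at `t ∈ (0,T)`. -/
def Regular (Φ : FMS N T) (t : ℝ) : Prop :=
  t ∈ Set.Ioo 0 T ∧
  (∀ e, DifferentiableAt ℝ (fun u => Φ.q u e) t) ∧
  (∀ e, DifferentiableAt ℝ (fun u => Φ.z u e) t) ∧
  (∀ f, DifferentiableAt ℝ (fun u => Φ.n u f) t) ∧
  (∀ σ, DifferentiableAt ℝ (fun u => Φ.s u σ) t) ∧
  (∀ f, DifferentiableAt ℝ (fun u => Φ.xbar u f) t) ∧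
  (∀ f, DifferentiableAt ℝ (fun u => Φ.fa u f) t) ∧
  (∀ f, DifferentiableAt ℝ (fun u => Φ.d u f) t) ∧
  (∀ f, DifferentiableAt ℝ (fun u => Φ.a u f) t)

/-- the instantaneous rate `x_f(t) = (d/dt) x̄_f(t)`. -/
noncomputable def rate (Φ : FMS N T) (t : ℝ) (f : F) : ℝ := deriv (fun u => Φ.xbar u f) t

/-- the α-fair objective `x^{1-α} n^α/(1-α) - q^α x`. -/
noncomputable def obj (α nf qf x : ℝ) : ℝ := x ^ (1 - α) * nf ^ α / (1 - α) - qf ^ α * x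

/-- the MWUM-α conditions (F9)-(F12). -/
def IsMWUM (Φ : FMS N T) (α : ℝ) : Prop :=
  (∀ t ∈ Set.Icc (0 : ℝ) T, ∀ e, Φ.z t e = 0) ∧
  ∀ t, Φ.Regular t →
    ((∀ f, (0 < Φ.n t f →
        Φ.rate t f ∈ Set.Icc (0 : ℝ) N.C ∧
        ∀ y ∈ Set.Icc (0 : ℝ) N.C,
          obj α (Φ.n t f) (Φ.q t (N.iota f)) y ≤
            obj α (Φ.n t f) (Φ.q t (N.iota f)) (Φ.rate t f)) ∧
      (Φ.n t f = 0 → Φ.rate t f = N.rho f)) ∧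
    (∀ π ∈ N.S, N.weight α (Φ.q t) π < N.maxWeight α (Φ.q t) →
        deriv (fun u => Φ.s u π) t = 0) ∧
    (∀ f, Φ.n t f = 0 → Φ.q t (N.iota f) = 0))

end FMS


/-- If an MWUM-α fluid model solution is constantly equal to
`(n,q)` on `[0,T]` (critically loaded system), then
`(Γρ)ᵀ q^α = max_{π∈S} πᵀ(I-R)q^α` and `n_f = ρ_f q_{ι(f)}` for all `f`. -/
theorem constant_solution_implies_invariant_conditions
    {E F : Type*} [Fintype E] [Fintype F] [DecidableEq E]
    (N : Network E F) (α : ℝ) (hα : 0 < α) (hα1 : α ≠ 1)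
    (hcrit : N.Leff = 1)
    (n : F → ℝ) (q : E → ℝ) (hn : ∀ f, 0 ≤ n f) (hq : ∀ e, 0 ≤ q e)
    (T : ℝ) (hT : 0 < T) (Φ : FMS N T) (hmw : Φ.IsMWUM α)
    (hconst : ∀ t ∈ Set.Icc (0 : ℝ) T, Φ.n t = n ∧ Φ.q t = q) :
    (∑ e, (N.Gam *ᵥ N.rho) e * q e ^ α = N.maxWeight α q) ∧
    ∀ f, n f = N.rho f * q (N.iota f) := by
  classical
  have h0T : (0:ℝ) ∈ Set.Icc (0:ℝ) T := Set.mem_Icc.2 ⟨le_refl _, hT.le⟩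
  -- the cumulative allocation is linear: x̄_f(t) = ρ_f t
  have hxbar : ∀ t ∈ Set.Icc (0:ℝ) T, ∀ f, Φ.xbar t f = N.rho f * t := by
    intro t ht f
    have h1 := Φ.eq_n t ht f
    rw [Φ.eq_fa t ht f, Φ.eq_d t ht f, (hconst t ht).1] at h1
    have hn0 : Φ.n 0 f = n f := by rw [(hconst 0 h0T).1]
    rw [hn0] at h1
    have hμ := N.hμ0 f
    have hx : N.μ f * Φ.xbar t f = N.ν f * t := by linarith
    rw [Network.rho]
    field_simp
    linear_combination hx
  -- a projection onto [0,T]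
  set pr : ℝ → ℝ := fun u => max 0 (min u T) with hprdef
  have hprmem : ∀ u, pr u ∈ Set.Icc (0:ℝ) T := fun u =>
    ⟨le_max_left _ _, max_le hT.le (min_le_right _ _)⟩
  have hprmono : Monotone pr := fun a b hab => max_le_max le_rfl (min_le_min hab le_rfl)
  have hpr_eq : ∀ u ∈ Set.Icc (0:ℝ) T, pr u = u := by
    intro u hu
    simp only [hprdef]
    rw [min_eq_left hu.2, max_eq_right hu.1]
  -- a.e. differentiability of the (monotone) schedule components
  have hae : ∀ᵐ u : ℝ, ∀ σ : {σ : E → ℝ // σ ∈ N.S},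
      DifferentiableAt ℝ (fun v => Φ.s (pr v) σ.1) u := by
    rw [MeasureTheory.ae_all_iff]
    intro σ
    exact Monotone.ae_differentiableAt fun a b hab =>
      Φ.mono_s (pr a) (hprmem a) (pr b) (hprmem b) (hprmono hab) σ.1
  obtain ⟨t₀, ht₀I, ht₀d⟩ :
      ∃ t₀, t₀ ∈ Set.Ioo (0:ℝ) T ∧ ∀ σ : {σ : E → ℝ // σ ∈ N.S},
        DifferentiableAt ℝ (fun v => Φ.s (pr v) σ.1) t₀ := by
    by_contra hcon
    push_neg at hcon
    have hsub : Set.Ioo (0:ℝ) T ⊆ {u | ¬ ∀ σ : {σ : E → ℝ // σ ∈ N.S},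
        DifferentiableAt ℝ (fun v => Φ.s (pr v) σ.1) u} := by
      intro u hu
      simp only [Set.mem_setOf_eq]
      intro hP
      obtain ⟨σ, hnd⟩ := hcon u hu
      exact hnd (hP σ)
    have h0 := MeasureTheory.measure_mono_null hsub (MeasureTheory.ae_iff.1 hae)
    rw [Real.volume_Ioo] at h0
    rw [ENNReal.ofReal_eq_zero] at h0
    linarith
  have ht₀Icc : t₀ ∈ Set.Icc (0:ℝ) T := ⟨ht₀I.1.le, ht₀I.2.le⟩
  have hmemI : Set.Icc (0:ℝ) T ∈ 𝓝 t₀ := Icc_mem_nhds ht₀I.1 ht₀I.2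
  -- differentiability of each schedule component at t₀
  have hdiffs : ∀ σ, DifferentiableAt ℝ (fun u => Φ.s u σ) t₀ := by
    intro σ
    by_cases hσ : σ ∈ N.S
    · have hEq : (fun v => Φ.s (pr v) σ) =ᶠ[𝓝 t₀] fun v => Φ.s v σ :=
        Filter.eventuallyEq_of_mem hmemI fun u hu => by rw [hpr_eq u hu]
      exact hEq.differentiableAt_iff.1 (ht₀d ⟨σ, hσ⟩)
    · have hEq : (fun v => Φ.s v σ) =ᶠ[𝓝 t₀] fun _ => (0:ℝ) :=
        Filter.eventuallyEq_of_mem hmemI fun u hu => Φ.supp_s u hu σ hσ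
      exact hEq.differentiableAt_iff.2 (differentiableAt_const 0)
  -- eventual equalities for the other components
  have hqE : ∀ e, (fun u => Φ.q u e) =ᶠ[𝓝 t₀] fun _ => q e := fun e =>
    Filter.eventuallyEq_of_mem hmemI fun u hu => by rw [(hconst u hu).2]
  have hnE : ∀ f, (fun u => Φ.n u f) =ᶠ[𝓝 t₀] fun _ => n f := fun f =>
    Filter.eventuallyEq_of_mem hmemI fun u hu => by rw [(hconst u hu).1]
  have hzE : ∀ e, (fun u => Φ.z u e) =ᶠ[𝓝 t₀] fun _ => (0:ℝ) := fun e =>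
    Filter.eventuallyEq_of_mem hmemI fun u hu => hmw.1 u hu e
  have hxE : ∀ f, (fun u => Φ.xbar u f) =ᶠ[𝓝 t₀] fun u => N.rho f * u := fun f =>
    Filter.eventuallyEq_of_mem hmemI fun u hu => hxbar u hu f
  have haE : ∀ f, (fun u => Φ.a u f) =ᶠ[𝓝 t₀] fun u => N.rho f * u := fun f =>
    Filter.eventuallyEq_of_mem hmemI fun u hu => by
      rw [Φ.eq_a u hu f, hxbar u hu f]
  have hfaE : ∀ f, (fun u => Φ.fa u f) =ᶠ[𝓝 t₀] fun u => N.ν f * u := fun f =>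
    Filter.eventuallyEq_of_mem hmemI fun u hu => by rw [Φ.eq_fa u hu f]
  have hdE : ∀ f, (fun u => Φ.d u f) =ᶠ[𝓝 t₀] fun u => N.μ f * (N.rho f * u) := fun f =>
    Filter.eventuallyEq_of_mem hmemI fun u hu => by
      rw [Φ.eq_d u hu f, hxbar u hu f]
  -- t₀ is a regular point
  have hreg : Φ.Regular t₀ := by
    refine ⟨ht₀I, ?_, ?_, ?_, hdiffs, ?_, ?_, ?_, ?_⟩
    · exact fun e => (hqE e).differentiableAt_iff.2 (differentiableAt_const _)
    · exact fun e => (hzE e).differentiableAt_iff.2 (differentiableAt_const _)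
    · exact fun f => (hnE f).differentiableAt_iff.2 (differentiableAt_const _)
    · exact fun f => (hxE f).differentiableAt_iff.2 (differentiableAt_id.const_mul _)
    · exact fun f => (hfaE f).differentiableAt_iff.2 (differentiableAt_id.const_mul _)
    · exact fun f => (hdE f).differentiableAt_iff.2
        ((differentiableAt_id.const_mul _).const_mul _)
    · exact fun f => (haE f).differentiableAt_iff.2 (differentiableAt_id.const_mul _)
  obtain ⟨hF9, hF11, hF12⟩ := hmw.2 t₀ hreg
  have hqt₀ : Φ.q t₀ = q := (hconst t₀ ht₀Icc).2
  have hnt₀ : Φ.n t₀ = n := (hconst t₀ ht₀Icc).1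
  -- the instantaneous rate is ρ
  have hrate : ∀ f, Φ.rate t₀ f = N.rho f := by
    intro f
    have h1 : deriv (fun u => Φ.xbar u f) t₀ = deriv (fun u => N.rho f * u) t₀ :=
      (hxE f).deriv_eq
    have h2 : HasDerivAt (fun u : ℝ => N.rho f * u) (N.rho f * 1) t₀ :=
      (hasDerivAt_id t₀).const_mul _
    rw [FMS.rate, h1, h2.deriv, mul_one]
  -- Goal 2
  have goal2 : ∀ f, n f = N.rho f * q (N.iota f) := by
    intro f
    rcases (hn f).lt_or_eq with hpos | h0
    · -- n f > 0
      obtain ⟨hmem, hmax⟩ := (hF9 f).1 (by rw [hnt₀]; exact hpos)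
      rw [hnt₀, hqt₀, hrate f] at hmax
      have hρpos : 0 < N.rho f := div_pos (N.hν f) (N.hμ0 f)
      have hρC : N.rho f < N.C := N.hC f
      have hlm : IsLocalMax (fun x : ℝ =>
          x ^ (1 - α) * (n f) ^ α / (1 - α) - q (N.iota f) ^ α * x) (N.rho f) := by
        have : IsLocalMax (fun x => FMS.obj α (n f) (q (N.iota f)) x) (N.rho f) :=
          Filter.eventually_of_mem (Icc_mem_nhds hρpos hρC) fun y hy => hmax y hy
        simpa [FMS.obj] using this
      have hd1 : HasDerivAt (fun x : ℝ => x ^ (1 - α))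
          ((1 - α) * N.rho f ^ (1 - α - 1)) (N.rho f) :=
        Real.hasDerivAt_rpow_const (Or.inl hρpos.ne')
      have hd2 : HasDerivAt (fun x : ℝ =>
            x ^ (1 - α) * (n f) ^ α / (1 - α) - q (N.iota f) ^ α * x)
          ((1 - α) * N.rho f ^ (1 - α - 1) * (n f) ^ α / (1 - α)
            - q (N.iota f) ^ α * 1) (N.rho f) :=
        ((hd1.mul_const _).div_const _).sub ((hasDerivAt_id (N.rho f)).const_mul _)
      have h0' := hlm.hasDerivAt_eq_zero hd2
      have h1α : (1:ℝ) - α ≠ 0 := sub_ne_zero.2 (Ne.symm hα1)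
      have hexp : (1:ℝ) - α - 1 = -α := by ring
      rw [hexp] at h0'
      have hkey : (n f) ^ α * N.rho f ^ (-α) = q (N.iota f) ^ α := by
        have e1 : (1 - α) * N.rho f ^ (-α) * (n f) ^ α / (1 - α)
            = N.rho f ^ (-α) * (n f) ^ α := by
          field_simp
        rw [e1] at h0'
        nlinarith [h0']
      have hdiv : (n f / N.rho f) ^ α = q (N.iota f) ^ α := by
        rw [Real.div_rpow (hn f) hρpos.le, div_eq_mul_inv, ← Real.rpow_neg hρpos.le]
        exact hkey
      have hval : n f / N.rho f = q (N.iota f) := by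
        have hcg := congrArg (fun y : ℝ => y ^ α⁻¹) hdiv
        rwa [← Real.rpow_mul (div_nonneg (hn f) hρpos.le),
          ← Real.rpow_mul (hq (N.iota f)),
          mul_inv_cancel₀ hα.ne', Real.rpow_one, Real.rpow_one] at hcg
      rw [div_eq_iff hρpos.ne'] at hval
      rw [hval]; ring
    · -- n f = 0
      have hq0 : q (N.iota f) = 0 := by
        have := hF12 f (by rw [hnt₀]; exact h0.symm)
        rwa [hqt₀] at this
      rw [← h0, hq0, mul_zero]
  -- abbreviation for the derivatives of the schedule components
  set ds : (E → ℝ) → ℝ := fun σ => deriv (fun u => Φ.s u σ) t₀ with hds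
  -- the derivatives sum to one
  have hsum1 : ∑ σ ∈ N.S, ds σ = 1 := by
    have h1 : HasDerivAt (fun t => ∑ σ ∈ N.S, Φ.s t σ) (∑ σ ∈ N.S, ds σ) t₀ :=
      HasDerivAt.fun_sum fun σ _ => (hdiffs σ).hasDerivAt
    have h2 : (fun t => ∑ σ ∈ N.S, Φ.s t σ) =ᶠ[𝓝 t₀] fun t => t :=
      Filter.eventuallyEq_of_mem hmemI fun u hu => Φ.eq_s u hu
    have h3 := h2.deriv_eq
    rw [h1.deriv] at h3
    simpa using h3
  -- per-queue balance at t₀ : (I - Rᵀ) Π ṡ = Γ ρ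
  have hkeyE : ∀ e, ∑ e', (1 - N.R.transpose) e e' * (∑ σ ∈ N.S, ds σ * σ e')
      = (N.Gam *ᵥ N.rho) e := by
    intro e
    have hG : (fun t => ∑ e', (1 - N.R.transpose) e e' * N.PiV (Φ.s t) e')
        =ᶠ[𝓝 t₀] fun t => t * (N.Gam *ᵥ N.rho) e := by
      apply Filter.eventuallyEq_of_mem hmemI
      intro u hu
      have hq1 := Φ.eq_q u hu e
      rw [(hconst u hu).2, (hconst 0 h0T).2] at hq1
      have hz0 : ((1 - N.R.transpose) *ᵥ Φ.z u) e = 0 := by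
        have hzu : Φ.z u = fun _ => 0 := funext fun e' => hmw.1 u hu e'
        rw [hzu]
        simp [Matrix.mulVec, dotProduct]
      have ha1 : (N.Gam *ᵥ Φ.a u) e = u * (N.Gam *ᵥ N.rho) e := by
        simp only [Matrix.mulVec, dotProduct]
        rw [Finset.mul_sum]
        refine Finset.sum_congr rfl fun f _ => ?_
        rw [Φ.eq_a u hu f, hxbar u hu f]
        ring
      have h2 : ((1 - N.R.transpose) *ᵥ N.PiV (Φ.s u)) e = u * (N.Gam *ᵥ N.rho) e := by
        rw [← ha1]
        linarith
      simpa [Matrix.mulVec, dotProduct] using h2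
    have hDer : HasDerivAt (fun t => ∑ e', (1 - N.R.transpose) e e' * N.PiV (Φ.s t) e')
        (∑ e', (1 - N.R.transpose) e e' * (∑ σ ∈ N.S, ds σ * σ e')) t₀ := by
      apply HasDerivAt.fun_sum
      intro e' _
      apply HasDerivAt.const_mul
      show HasDerivAt (fun t => ∑ σ ∈ N.S, Φ.s t σ * σ e') _ _
      exact HasDerivAt.fun_sum fun σ _ => ((hdiffs σ).hasDerivAt.mul_const (σ e'))
    have h2 : HasDerivAt (fun t : ℝ => t * (N.Gam *ᵥ N.rho) e) ((N.Gam *ᵥ N.rho) e) t₀ := by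
      simpa using (hasDerivAt_id t₀).mul_const ((N.Gam *ᵥ N.rho) e)
    have h3 := hG.deriv_eq
    rw [hDer.deriv, h2.deriv] at h3
    exact h3
  -- derivatives are nonnegative
  have hdsnn : ∀ σ ∈ N.S, 0 ≤ ds σ := by
    intro σ hσ
    have hder : Filter.Tendsto (slope (fun u => Φ.s u σ) t₀) (𝓝[≠] t₀) (𝓝 (ds σ)) :=
      hasDerivAt_iff_tendsto_slope.1 (hdiffs σ).hasDerivAt
    have hder' : Filter.Tendsto (slope (fun u => Φ.s u σ) t₀) (𝓝[>] t₀) (𝓝 (ds σ)) :=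
      hder.mono_left (nhdsWithin_mono t₀ fun x hx => ne_of_gt hx)
    refine ge_of_tendsto hder' ?_
    filter_upwards [Ioo_mem_nhdsGT_of_mem (Set.mem_Ico.2 ⟨le_refl t₀, ht₀I.2⟩)] with u hu
    have hmem1 : u ∈ Set.Icc (0:ℝ) T := ⟨(ht₀I.1.trans hu.1).le, hu.2.le⟩
    have hmono := Φ.mono_s t₀ ht₀Icc u hmem1 hu.1.le σ
    rw [slope_def_field]
    exact div_nonneg (sub_nonneg.2 hmono) (sub_nonneg.2 hu.1.le)
  -- Goal 1
  set P : E → ℝ := fun e' => ∑ σ ∈ N.S, ds σ * σ e' with hP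
  set W : E → ℝ := fun e' => ∑ e, (1 - N.R) e' e * q e ^ α with hW
  have hWeq : ∀ σ : E → ℝ, N.weight α q σ = ∑ e', σ e' * W e' := by
    intro σ
    rw [Network.weight]
    refine Finset.sum_congr rfl fun e _ => ?_
    rw [hW]
    simp [Matrix.mulVec, dotProduct]
  have goal1 : ∑ e, (N.Gam *ᵥ N.rho) e * q e ^ α = N.maxWeight α q := by
    have h1 : ∀ e : E, ∀ e' : E, (1 - N.R.transpose) e e' = (1 - N.R) e' e := by
      intro e e'
      by_cases h : e = e'
      · subst h; simp [Matrix.sub_apply, Matrix.transpose_apply]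
      · simp [Matrix.sub_apply, Matrix.transpose_apply, Matrix.one_apply, h, Ne.symm h]
    calc ∑ e, (N.Gam *ᵥ N.rho) e * q e ^ α
        = ∑ e, (∑ e', (1 - N.R.transpose) e e' * P e') * q e ^ α :=
          Finset.sum_congr rfl fun e _ => by simp only [hP]; rw [hkeyE e]
      _ = ∑ e', P e' * W e' := by
          simp only [hW, Finset.sum_mul, Finset.mul_sum]
          rw [Finset.sum_comm]
          refine Finset.sum_congr rfl fun e' _ => Finset.sum_congr rfl fun e _ => ?_
          rw [h1 e e']
          ring
      _ = ∑ σ ∈ N.S, ds σ * N.weight α q σ := by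
          simp only [hP, hWeq, Finset.sum_mul, Finset.mul_sum]
          rw [Finset.sum_comm]
          refine Finset.sum_congr rfl fun σ _ => Finset.sum_congr rfl fun e' _ => ?_
          ring
      _ = N.maxWeight α q := by
          have hterm : ∀ σ ∈ N.S, ds σ * N.weight α q σ = ds σ * N.maxWeight α q := by
            intro σ hσ
            rcases eq_or_lt_of_le (Finset.le_sup' (N.weight α q) hσ) with h | h
            · rw [h]; rfl
            · have h0 : ds σ = 0 := by
                have hzz := hF11 σ hσ
                rw [hqt₀] at hzz
                exact hzz h
              rw [h0, zero_mul, zero_mul]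
          rw [Finset.sum_congr rfl hterm, ← Finset.sum_mul, hsum1, one_mul]
  exact ⟨goal1, goal2⟩
end

section
/- Fix the sets ℰ, ℱ and the parameters μ ∈ (0,1)^ℱ, ν ∈ (0,∞)^ℱ, and suppose the system is critically loaded (Leff(ρ) = 1). There exists a function β : (0,∞)\{1} → ℝ₊, depending only on μ, ν, |ℰ| and |ℱ|, with β(α) → 0 as α → 0⁺, such that for every α ∈ (0,∞)\{1} and every fixed point (n*, q*) of the lifting map (Δ(n*, q*) = (n*, q*)), one has c(n*, q*) ≤ (1 + β(α)) c*(n*, q*). -/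
open Matrix Filter

lemma aux_coef (α m v x : ℝ) (hα : 0 < α) (hm : 0 < m) (hv : 0 < v) (hx : 0 ≤ x) :
    (m * m / v) ^ α * (x / m) ^ (1 + α) = x ^ (1 + α) / (m * (v / m) ^ α) := by
  have h1 : (x / m) ^ (1 + α) = x ^ (1 + α) / m ^ (1 + α) := Real.div_rpow hx hm.le _
  have h2 : (m * m / v) ^ α = m ^ α * m ^ α / v ^ α := by
    rw [Real.div_rpow (by positivity) hv.le, Real.mul_rpow hm.le hm.le]
  have h3 : (v / m) ^ α = v ^ α / m ^ α := Real.div_rpow hv.le hm.le _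
  have h4 : m ^ (1 + α) = m * m ^ α := by rw [Real.rpow_add hm, Real.rpow_one]
  have hma : (0 : ℝ) < m ^ α := Real.rpow_pos_of_pos hm α
  have hva : (0 : ℝ) < v ^ α := Real.rpow_pos_of_pos hv α
  rw [h1, h2, h3, h4]
  field_simp

lemma aux_key_ineq {ι : Type*} [Fintype ι] {α a b d : ℝ} (hα : 0 < α) (ha : 0 < a)
    (c y y' : ι → ℝ) (hc1 : ∀ i, a ≤ c i) (hc2 : ∀ i, c i ≤ b)
    (hy : ∀ i, 0 ≤ y i) (hy' : ∀ i, 0 ≤ y' i)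
    (hd : (Fintype.card ι : ℝ) ≤ d) (hb : 0 < b)
    (hK : 1 ≤ d * b / a)
    (hL : ∑ i, c i ^ α * y i ^ (1 + α) ≤ ∑ i, c i ^ α * y' i ^ (1 + α)) :
    ∑ i, y i ≤ (d * b / a) ^ α * ∑ i, y' i := by
  have hp1 : (1 : ℝ) ≤ 1 + α := by linarith
  have hp0 : (0 : ℝ) < 1 + α := by linarith
  rcases isEmpty_or_nonempty ι with h | h
  · simp [Finset.univ_eq_empty]
  · set m : ℝ := (Fintype.card ι : ℝ) with hm
    have hm0 : (0 : ℝ) < m := by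
      rw [hm]; exact_mod_cast Fintype.card_pos (α := ι)
    set S := ∑ i, y i with hS
    set S' := ∑ i, y' i with hS'
    have hS0 : 0 ≤ S := Finset.sum_nonneg fun i _ => hy i
    have hS'0 : 0 ≤ S' := Finset.sum_nonneg fun i _ => hy' i
    set K := d * b / a with hKdef
    have hK0 : (0 : ℝ) < K := lt_of_lt_of_le one_pos hK
    -- step 1
    have step1 : S ^ (1 + α) ≤ m ^ α * ∑ i, y i ^ (1 + α) := by
      have harith := Real.rpow_arith_mean_le_arith_mean_rpow Finset.univ
        (fun _ : ι => m⁻¹) y (fun _ _ => inv_nonneg.2 hm0.le)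
        (by simp only [Finset.sum_const, nsmul_eq_mul, Finset.card_univ]; exact mul_inv_cancel₀ hm0.ne')
        (fun i _ => hy i) hp1
      rw [← Finset.mul_sum, ← Finset.mul_sum,
        Real.mul_rpow (inv_nonneg.2 hm0.le) hS0] at harith
      have e1 : m ^ (1 + α) * m⁻¹ = m ^ α := by
        rw [show (1 : ℝ) + α = α + 1 by ring, Real.rpow_add_one hm0.ne']
        field_simp
      calc S ^ (1 + α) = (m ^ (1 + α) * m⁻¹ ^ (1 + α)) * S ^ (1 + α) := by
            rw [← Real.mul_rpow hm0.le (inv_nonneg.2 hm0.le), mul_inv_cancel₀ hm0.ne',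
              Real.one_rpow, one_mul]
        _ = m ^ (1 + α) * (m⁻¹ ^ (1 + α) * S ^ (1 + α)) := by ring
        _ ≤ m ^ (1 + α) * (m⁻¹ * ∑ i, y i ^ (1 + α)) :=
            mul_le_mul_of_nonneg_left harith (Real.rpow_nonneg hm0.le _)
        _ = m ^ α * ∑ i, y i ^ (1 + α) := by rw [← mul_assoc, e1]
    -- step 2
    have step2 : ∑ i, y i ^ (1 + α) ≤ a⁻¹ ^ α * ∑ i, c i ^ α * y i ^ (1 + α) := by
      rw [Finset.mul_sum]
      refine Finset.sum_le_sum fun i _ => ?_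
      calc y i ^ (1 + α) = (a⁻¹ ^ α * a ^ α) * y i ^ (1 + α) := by
            rw [← Real.mul_rpow (inv_nonneg.2 ha.le) ha.le, inv_mul_cancel₀ ha.ne',
              Real.one_rpow, one_mul]
        _ ≤ a⁻¹ ^ α * (c i ^ α * y i ^ (1 + α)) := by
            rw [mul_assoc]
            exact mul_le_mul_of_nonneg_left
              (mul_le_mul_of_nonneg_right (Real.rpow_le_rpow ha.le (hc1 i) hα.le)
                (Real.rpow_nonneg (hy i) _))
              (Real.rpow_nonneg (inv_nonneg.2 ha.le) _)
    -- step 4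
    have step4 : ∑ i, c i ^ α * y' i ^ (1 + α) ≤ b ^ α * ∑ i, y' i ^ (1 + α) := by
      rw [Finset.mul_sum]
      refine Finset.sum_le_sum fun i _ => ?_
      exact mul_le_mul_of_nonneg_right
        (Real.rpow_le_rpow (le_trans ha.le (hc1 i)) (hc2 i) hα.le)
        (Real.rpow_nonneg (hy' i) _)
    -- step 5
    have step5 : ∑ i, y' i ^ (1 + α) ≤ S' ^ (1 + α) := by
      rcases eq_or_lt_of_le hS'0 with h0 | h0
      · have hall : ∀ i ∈ Finset.univ, y' i = 0 :=
          (Finset.sum_eq_zero_iff_of_nonneg (fun i _ => hy' i)).1 h0.symm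
        have : ∀ i ∈ Finset.univ, y' i ^ (1 + α) = (0:ℝ) := fun i hi => by
          rw [hall i hi, Real.zero_rpow hp0.ne']
        rw [Finset.sum_congr rfl this, Finset.sum_const, smul_zero]
        positivity
      · have hstep : ∀ i, y' i ^ (1 + α) ≤ S' ^ α * y' i := by
          intro i
          rcases eq_or_lt_of_le (hy' i) with h1 | h1
          · rw [← h1, Real.zero_rpow hp0.ne', mul_zero]
          · rw [show (1 : ℝ) + α = α + 1 by ring, Real.rpow_add_one h1.ne']
            exact mul_le_mul_of_nonneg_right
              (Real.rpow_le_rpow (hy' i)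
                (Finset.single_le_sum (fun j _ => hy' j) (Finset.mem_univ i)) hα.le)
              (hy' i)
        calc ∑ i, y' i ^ (1 + α) ≤ ∑ i, S' ^ α * y' i :=
              Finset.sum_le_sum fun i _ => hstep i
          _ = S' ^ α * S' := by rw [← Finset.mul_sum]
          _ = S' ^ (1 + α) := by
              rw [show (1 : ℝ) + α = α + 1 by ring, Real.rpow_add_one h0.ne']
    -- combine
    have hfin : S ^ (1 + α) ≤ K ^ α * S' ^ (1 + α) := by
      have h1 : S ^ (1 + α) ≤ m ^ α * (a⁻¹ ^ α * (b ^ α * S' ^ (1 + α))) := by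
        calc S ^ (1 + α) ≤ m ^ α * ∑ i, y i ^ (1 + α) := step1
          _ ≤ m ^ α * (a⁻¹ ^ α * ∑ i, c i ^ α * y i ^ (1 + α)) :=
              mul_le_mul_of_nonneg_left step2 (Real.rpow_nonneg hm0.le _)
          _ ≤ m ^ α * (a⁻¹ ^ α * ∑ i, c i ^ α * y' i ^ (1 + α)) := by
              refine mul_le_mul_of_nonneg_left
                (mul_le_mul_of_nonneg_left hL (Real.rpow_nonneg (inv_nonneg.2 ha.le) _))
                (Real.rpow_nonneg hm0.le _)
          _ ≤ m ^ α * (a⁻¹ ^ α * (b ^ α * ∑ i, y' i ^ (1 + α))) := by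
              refine mul_le_mul_of_nonneg_left
                (mul_le_mul_of_nonneg_left step4 (Real.rpow_nonneg (inv_nonneg.2 ha.le) _))
                (Real.rpow_nonneg hm0.le _)
          _ ≤ m ^ α * (a⁻¹ ^ α * (b ^ α * S' ^ (1 + α))) := by
              refine mul_le_mul_of_nonneg_left
                (mul_le_mul_of_nonneg_left
                  (mul_le_mul_of_nonneg_left step5 (Real.rpow_nonneg hb.le _))
                  (Real.rpow_nonneg (inv_nonneg.2 ha.le) _))
                (Real.rpow_nonneg hm0.le _)
      have h2 : m ^ α * (a⁻¹ ^ α * (b ^ α * S' ^ (1 + α))) = (m * b / a) ^ α * S' ^ (1 + α) := by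
        rw [show m * b / a = m * (a⁻¹ * b) by ring, Real.mul_rpow hm0.le (by positivity),
          Real.mul_rpow (inv_nonneg.2 ha.le) hb.le]
        ring
      have h3 : (m * b / a) ^ α ≤ K ^ α := by
        refine Real.rpow_le_rpow (by positivity) ?_ hα.le
        rw [hKdef]
        gcongr
      calc S ^ (1 + α) ≤ (m * b / a) ^ α * S' ^ (1 + α) := h1.trans_eq h2
        _ ≤ K ^ α * S' ^ (1 + α) :=
            mul_le_mul_of_nonneg_right h3 (Real.rpow_nonneg hS'0 _)
    -- root extraction
    have hroot : S ≤ K ^ (α * (1 + α)⁻¹) * S' := by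
      have e0 : S = (S ^ (1 + α)) ^ (1 + α)⁻¹ := by
        rw [← Real.rpow_mul hS0, mul_inv_cancel₀ hp0.ne', Real.rpow_one]
      rw [e0]
      calc (S ^ (1 + α)) ^ (1 + α)⁻¹ ≤ (K ^ α * S' ^ (1 + α)) ^ (1 + α)⁻¹ :=
            Real.rpow_le_rpow (Real.rpow_nonneg hS0 _) hfin (inv_nonneg.2 hp0.le)
        _ = (K ^ α) ^ (1 + α)⁻¹ * (S' ^ (1 + α)) ^ (1 + α)⁻¹ :=
            Real.mul_rpow (Real.rpow_nonneg hK0.le _) (Real.rpow_nonneg hS'0 _)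
        _ = K ^ (α * (1 + α)⁻¹) * S' := by
            rw [← Real.rpow_mul hK0.le, ← Real.rpow_mul hS'0,
              mul_inv_cancel₀ hp0.ne', Real.rpow_one]
    refine hroot.trans (mul_le_mul_of_nonneg_right ?_ hS'0)
    refine Real.rpow_le_rpow_of_exponent_le hK ?_
    have h5 : (1 + α)⁻¹ ≤ 1 := by
      rw [inv_le_one_iff₀]; right; linarith
    nlinarith


section AuxNet
variable {E F : Type*} [Fintype E] [Fintype F] [DecidableEq E]

lemma aux_workload_comb (N : Network E F) (ζ : E → ℝ) (t s : ℝ)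
    (n n' : F → ℝ) (q q' : E → ℝ) :
    N.workload ζ (fun f => t * n f + s * n' f) (fun e => t * q e + s * q' e)
      = t * N.workload ζ n q + s * N.workload ζ n' q' := by
  unfold Network.workload
  simp only [Matrix.mulVec, dotProduct, Pi.add_apply]
  rw [Finset.mul_sum, Finset.mul_sum, ← Finset.sum_add_distrib]
  refine Finset.sum_congr rfl fun e _ => ?_
  have hf : ∀ e' : E, (∑ f, N.Gam e' f * ((t * n f + s * n' f) / N.μ f))
      = t * (∑ f, N.Gam e' f * (n f / N.μ f)) + s * (∑ f, N.Gam e' f * (n' f / N.μ f)) := by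
    intro e'
    rw [Finset.mul_sum, Finset.mul_sum, ← Finset.sum_add_distrib]
    refine Finset.sum_congr rfl fun f _ => ?_
    field_simp
  have hinner : (∑ e', N.Xi e e' * ((t * q e' + s * q' e')
        + ∑ f, N.Gam e' f * ((t * n f + s * n' f) / N.μ f)))
      = t * (∑ e', N.Xi e e' * (q e' + ∑ f, N.Gam e' f * (n f / N.μ f)))
        + s * (∑ e', N.Xi e e' * (q' e' + ∑ f, N.Gam e' f * (n' f / N.μ f))) := by
    rw [Finset.mul_sum, Finset.mul_sum, ← Finset.sum_add_distrib]
    refine Finset.sum_congr rfl fun e' _ => ?_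
    rw [hf e']
    ring
  rw [hinner]
  ring

lemma aux_workload_cont (N : Network E F) (ζ : E → ℝ) :
    Continuous fun p : (F → ℝ) × (E → ℝ) => N.workload ζ p.1 p.2 := by
  unfold Network.workload
  simp only [Matrix.mulVec, dotProduct, Pi.add_apply]
  refine continuous_finset_sum _ fun e _ => Continuous.mul continuous_const ?_
  refine continuous_finset_sum _ fun e' _ => Continuous.mul continuous_const ?_
  refine Continuous.add ((continuous_apply e').comp continuous_snd) ?_
  refine continuous_finset_sum _ fun f _ => Continuous.mul continuous_const ?_
  exact ((continuous_apply f).comp continuous_fst).div_const _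

lemma aux_existsUnique (N : Network E F) (α : ℝ) (hα : 0 < α) (n : F → ℝ) (q : E → ℝ)
    (hn : ∀ f, 0 ≤ n f) (hq : ∀ e, 0 ≤ q e) :
    ∃! p', N.bALGDOpt α n q p' := by
  classical
  have hp0 : (0 : ℝ) < 1 + α := by linarith
  have hρ : ∀ f, 0 < N.rho f := fun f => div_pos (N.hν f) (N.hμ0 f)
  have hcf : ∀ f, 0 < N.μ f * N.rho f ^ α :=
    fun f => mul_pos (N.hμ0 f) (Real.rpow_pos_of_pos (hρ f) α)
  have hrc : Continuous fun x : ℝ => x ^ (1 + α) :=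
    continuous_iff_continuousAt.2 fun x => Real.continuousAt_rpow_const x _ (Or.inr hp0.le)
  have hLcont : Continuous fun p : (F → ℝ) × (E → ℝ) => N.Lyap α p.1 p.2 := by
    unfold Network.Lyap
    refine Continuous.add (continuous_finset_sum _ fun f _ => ?_)
      (continuous_finset_sum _ fun e _ => ?_)
    · exact (hrc.comp ((continuous_apply f).comp continuous_fst)).div_const _
    · exact hrc.comp ((continuous_apply e).comp continuous_snd)
  set Feas : Set ((F → ℝ) × (E → ℝ)) := {p | N.bALGDFeas n q p} with hFeas
  have hFc : IsClosed Feas := by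
    have h1 : Feas = (⋂ f, {p : (F → ℝ) × (E → ℝ) | 0 ≤ p.1 f}) ∩
        ((⋂ e, {p : (F → ℝ) × (E → ℝ) | 0 ≤ p.2 e}) ∩
          ⋂ ζ ∈ N.CRstar,
            {p : (F → ℝ) × (E → ℝ) | N.workload ζ n q ≤ N.workload ζ p.1 p.2}) := by
      ext p
      simp [hFeas, Network.bALGDFeas, Set.mem_iInter]
    rw [h1]
    have c1 : IsClosed (⋂ f, {p : (F → ℝ) × (E → ℝ) | 0 ≤ p.1 f}) :=
      isClosed_iInter fun f : F =>
        isClosed_le continuous_const ((continuous_apply f).comp continuous_fst)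
    have c2 : IsClosed (⋂ e, {p : (F → ℝ) × (E → ℝ) | 0 ≤ p.2 e}) :=
      isClosed_iInter fun e : E =>
        isClosed_le continuous_const ((continuous_apply e).comp continuous_snd)
    have c3 : IsClosed (⋂ ζ ∈ N.CRstar,
        {p : (F → ℝ) × (E → ℝ) | N.workload ζ n q ≤ N.workload ζ p.1 p.2}) :=
      isClosed_biInter fun ζ _ => isClosed_le continuous_const (aux_workload_cont N ζ)
    exact c1.inter (c2.inter c3)
  have hself : (n, q) ∈ Feas := ⟨hn, hq, fun ζ _ => le_refl _⟩
  set B := N.Lyap α n q with hB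
  set KS : Set ((F → ℝ) × (E → ℝ)) := Feas ∩ {p | N.Lyap α p.1 p.2 ≤ B} with hKS
  have hKc : IsClosed KS := hFc.inter (isClosed_le hLcont continuous_const)
  have hKne : (n, q) ∈ KS := ⟨hself, le_of_eq hB.symm⟩
  -- coordinate bound
  have hcoord : ∀ x B' : ℝ, 0 ≤ x → x ^ (1 + α) ≤ B' → x ≤ max 1 B' := by
    intro x B' hx hxB
    rcases le_or_gt x 1 with h1 | h1
    · exact le_trans h1 (le_max_left _ _)
    · refine le_trans ?_ (le_max_right 1 B')
      calc x = x ^ (1 : ℝ) := (Real.rpow_one x).symm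
        _ ≤ x ^ (1 + α) := Real.rpow_le_rpow_of_exponent_le h1.le (by linarith)
        _ ≤ B' := hxB
  set R : ℝ := (∑ f : F, max 1 (B * (N.μ f * N.rho f ^ α))) + (∑ e : E, max 1 B) + 1 with hR
  have hmax_nonneg : ∀ x : ℝ, (0:ℝ) ≤ max 1 x := fun x => le_trans zero_le_one (le_max_left _ _)
  have hsub : KS ⊆ Set.Icc (0, 0) ((fun _ => R), (fun _ => R)) := by
    intro p hp
    obtain ⟨⟨hp1, hp2, _⟩, hpL⟩ := hp
    have hterm1 : ∀ f, p.1 f ^ (1 + α) / (N.μ f * N.rho f ^ α) ≤ B := by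
      intro f
      refine le_trans ?_ hpL
      unfold Network.Lyap
      refine le_trans (Finset.single_le_sum
        (f := fun f => p.1 f ^ (1 + α) / (N.μ f * N.rho f ^ α))
        (fun i _ => div_nonneg (Real.rpow_nonneg (hp1 i) _) (hcf i).le)
        (Finset.mem_univ f)) ?_
      exact le_add_of_nonneg_right
        (Finset.sum_nonneg fun e _ => Real.rpow_nonneg (hp2 e) _)
    have hterm2 : ∀ e, p.2 e ^ (1 + α) ≤ B := by
      intro e
      refine le_trans ?_ hpL
      unfold Network.Lyap
      refine le_trans (Finset.single_le_sum (f := fun e => p.2 e ^ (1 + α))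
        (fun i _ => Real.rpow_nonneg (hp2 i) _) (Finset.mem_univ e)) ?_
      exact le_add_of_nonneg_left (Finset.sum_nonneg fun i _ =>
        div_nonneg (Real.rpow_nonneg (hp1 i) _) (hcf i).le)
    constructor
    · exact ⟨hp1, hp2⟩
    · constructor
      · intro f
        have h1 : p.1 f ≤ max 1 (B * (N.μ f * N.rho f ^ α)) :=
          hcoord _ _ (hp1 f) ((div_le_iff₀ (hcf f)).1 (hterm1 f))
        refine le_trans h1 ?_
        rw [hR]
        have h2 : max 1 (B * (N.μ f * N.rho f ^ α))
            ≤ ∑ f' : F, max 1 (B * (N.μ f' * N.rho f' ^ α)) :=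
          Finset.single_le_sum (f := fun f' => max 1 (B * (N.μ f' * N.rho f' ^ α)))
            (fun i _ => hmax_nonneg _) (Finset.mem_univ f)
        have h3 : (0:ℝ) ≤ ∑ _e : E, max 1 B := Finset.sum_nonneg fun i _ => hmax_nonneg _
        linarith
      · intro e
        have h1 : p.2 e ≤ max 1 B := hcoord _ _ (hp2 e) (hterm2 e)
        refine le_trans h1 ?_
        rw [hR]
        have h2 : max 1 B ≤ ∑ _e : E, max 1 B :=
          Finset.single_le_sum (f := fun _e : E => max 1 B) (fun i _ => hmax_nonneg _)
            (Finset.mem_univ e)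
        have h3 : (0:ℝ) ≤ ∑ f : F, max 1 (B * (N.μ f * N.rho f ^ α)) :=
          Finset.sum_nonneg fun i _ => hmax_nonneg _
        linarith
  have hcompact : IsCompact KS := IsCompact.of_isClosed_subset isCompact_Icc hKc hsub
  obtain ⟨p₀, hp₀, hmin⟩ := hcompact.exists_isMinOn ⟨(n, q), hKne⟩ hLcont.continuousOn
  have hopt : N.bALGDOpt α n q p₀ := by
    refine ⟨hp₀.1, fun p' hp' => ?_⟩
    rcases le_or_gt (N.Lyap α p'.1 p'.2) B with h | h
    · exact hmin (Set.mem_inter hp' h)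
    · exact le_trans (hmin hKne) h.le
  refine ⟨p₀, hopt, fun p₁ h₁ => ?_⟩
  by_contra hne
  have hv : N.Lyap α p₁.1 p₁.2 = N.Lyap α p₀.1 p₀.2 :=
    le_antisymm (h₁.2 _ hopt.1) (hopt.2 _ h₁.1)
  set m1 : F → ℝ := fun f => (1/2 : ℝ) * p₁.1 f + (1/2 : ℝ) * p₀.1 f with hm1
  set m2 : E → ℝ := fun e => (1/2 : ℝ) * p₁.2 e + (1/2 : ℝ) * p₀.2 e with hm2
  have hmfeas : N.bALGDFeas n q (m1, m2) := by
    refine ⟨fun f => ?_, fun e => ?_, fun ζ hζ => ?_⟩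
    · have := h₁.1.1 f; have := hopt.1.1 f
      simp only [hm1]; positivity
    · have := h₁.1.2.1 e; have := hopt.1.2.1 e
      simp only [hm2]; positivity
    · show N.workload ζ n q ≤ N.workload ζ m1 m2
      rw [hm1, hm2, aux_workload_comb]
      have h1 := h₁.1.2.2 ζ hζ
      have h0 := hopt.1.2.2 ζ hζ
      linarith
  have hsc := strictConvexOn_rpow (p := 1 + α) (by linarith)
  have hconv : ∀ x y : ℝ, 0 ≤ x → 0 ≤ y →
      ((1/2 : ℝ) * x + (1/2 : ℝ) * y) ^ (1 + α)
        ≤ (1/2 : ℝ) * x ^ (1 + α) + (1/2 : ℝ) * y ^ (1 + α) := by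
    intro x y hx hy
    rcases eq_or_ne x y with rfl | hxy
    · rw [show (1/2 : ℝ) * x + (1/2 : ℝ) * x = x by ring]
      rw [show (1/2 : ℝ) * x ^ (1+α) + (1/2 : ℝ) * x ^ (1+α) = x ^ (1+α) by ring]
    · exact le_of_lt (by
        have := hsc.2 (Set.mem_Ici.2 hx) (Set.mem_Ici.2 hy) hxy
          (by norm_num : (0:ℝ) < 1/2) (by norm_num : (0:ℝ) < 1/2) (by norm_num)
        simpa [smul_eq_mul] using this)
  have hconvs : ∀ x y : ℝ, 0 ≤ x → 0 ≤ y → x ≠ y →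
      ((1/2 : ℝ) * x + (1/2 : ℝ) * y) ^ (1 + α)
        < (1/2 : ℝ) * x ^ (1 + α) + (1/2 : ℝ) * y ^ (1 + α) := by
    intro x y hx hy hxy
    have := hsc.2 (Set.mem_Ici.2 hx) (Set.mem_Ici.2 hy) hxy
      (by norm_num : (0:ℝ) < 1/2) (by norm_num : (0:ℝ) < 1/2) (by norm_num)
    simpa [smul_eq_mul] using this
  -- per-coordinate comparisons for the two sums
  have hAle : ∀ f, m1 f ^ (1 + α) / (N.μ f * N.rho f ^ α)
      ≤ (1/2 : ℝ) * (p₁.1 f ^ (1 + α) / (N.μ f * N.rho f ^ α))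
        + (1/2 : ℝ) * (p₀.1 f ^ (1 + α) / (N.μ f * N.rho f ^ α)) := by
    intro f
    have h := hconv (p₁.1 f) (p₀.1 f) (h₁.1.1 f) (hopt.1.1 f)
    rw [show (1/2 : ℝ) * (p₁.1 f ^ (1+α) / (N.μ f * N.rho f ^ α))
        + (1/2 : ℝ) * (p₀.1 f ^ (1+α) / (N.μ f * N.rho f ^ α))
      = ((1/2 : ℝ) * p₁.1 f ^ (1+α) + (1/2 : ℝ) * p₀.1 f ^ (1+α))
        / (N.μ f * N.rho f ^ α) by ring]
    exact (div_le_div_iff_of_pos_right (hcf f)).2 h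
  have hAlt : ∀ f, p₁.1 f ≠ p₀.1 f → m1 f ^ (1 + α) / (N.μ f * N.rho f ^ α)
      < (1/2 : ℝ) * (p₁.1 f ^ (1 + α) / (N.μ f * N.rho f ^ α))
        + (1/2 : ℝ) * (p₀.1 f ^ (1 + α) / (N.μ f * N.rho f ^ α)) := by
    intro f hf
    have h := hconvs (p₁.1 f) (p₀.1 f) (h₁.1.1 f) (hopt.1.1 f) hf
    rw [show (1/2 : ℝ) * (p₁.1 f ^ (1+α) / (N.μ f * N.rho f ^ α))
        + (1/2 : ℝ) * (p₀.1 f ^ (1+α) / (N.μ f * N.rho f ^ α))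
      = ((1/2 : ℝ) * p₁.1 f ^ (1+α) + (1/2 : ℝ) * p₀.1 f ^ (1+α))
        / (N.μ f * N.rho f ^ α) by ring]
    exact (div_lt_div_iff_of_pos_right (hcf f)).2 h
  -- assemble contradiction
  have hBle : ∀ e, m2 e ^ (1 + α)
      ≤ (1/2 : ℝ) * p₁.2 e ^ (1 + α) + (1/2 : ℝ) * p₀.2 e ^ (1 + α) :=
    fun e => hconv (p₁.2 e) (p₀.2 e) (h₁.1.2.1 e) (hopt.1.2.1 e)
  have hBlt : ∀ e, p₁.2 e ≠ p₀.2 e → m2 e ^ (1 + α)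
      < (1/2 : ℝ) * p₁.2 e ^ (1 + α) + (1/2 : ℝ) * p₀.2 e ^ (1 + α) :=
    fun e he => hconvs (p₁.2 e) (p₀.2 e) (h₁.1.2.1 e) (hopt.1.2.1 e) he
  have hLm : N.Lyap α m1 m2 = (∑ f, m1 f ^ (1 + α) / (N.μ f * N.rho f ^ α))
      + ∑ e, m2 e ^ (1 + α) := rfl
  have hL1 : N.Lyap α p₁.1 p₁.2 = (∑ f, p₁.1 f ^ (1 + α) / (N.μ f * N.rho f ^ α))
      + ∑ e, p₁.2 e ^ (1 + α) := rfl
  have hL0 : N.Lyap α p₀.1 p₀.2 = (∑ f, p₀.1 f ^ (1 + α) / (N.μ f * N.rho f ^ α))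
      + ∑ e, p₀.2 e ^ (1 + α) := rfl
  have hsumA : ∑ f, m1 f ^ (1 + α) / (N.μ f * N.rho f ^ α)
      ≤ (1/2 : ℝ) * (∑ f, p₁.1 f ^ (1 + α) / (N.μ f * N.rho f ^ α))
        + (1/2 : ℝ) * (∑ f, p₀.1 f ^ (1 + α) / (N.μ f * N.rho f ^ α)) := by
    rw [Finset.mul_sum, Finset.mul_sum, ← Finset.sum_add_distrib]
    exact Finset.sum_le_sum fun f _ => hAle f
  have hsumB : ∑ e, m2 e ^ (1 + α)
      ≤ (1/2 : ℝ) * (∑ e, p₁.2 e ^ (1 + α)) + (1/2 : ℝ) * (∑ e, p₀.2 e ^ (1 + α)) := by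
    rw [Finset.mul_sum, Finset.mul_sum, ← Finset.sum_add_distrib]
    exact Finset.sum_le_sum fun e _ => hBle e
  have hne' : p₁.1 ≠ p₀.1 ∨ p₁.2 ≠ p₀.2 := by
    by_contra hcon
    push_neg at hcon
    exact hne (Prod.ext hcon.1 hcon.2)
  have hlower : N.Lyap α p₀.1 p₀.2 ≤ N.Lyap α m1 m2 := hopt.2 (m1, m2) hmfeas
  rcases hne' with hd1 | hd2
  · obtain ⟨f0, hf0⟩ := Function.ne_iff.1 hd1
    have hstrict : ∑ f, m1 f ^ (1 + α) / (N.μ f * N.rho f ^ α)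
        < (1/2 : ℝ) * (∑ f, p₁.1 f ^ (1 + α) / (N.μ f * N.rho f ^ α))
          + (1/2 : ℝ) * (∑ f, p₀.1 f ^ (1 + α) / (N.μ f * N.rho f ^ α)) := by
      rw [Finset.mul_sum, Finset.mul_sum, ← Finset.sum_add_distrib]
      exact Finset.sum_lt_sum (fun f _ => hAle f) ⟨f0, Finset.mem_univ f0, hAlt f0 hf0⟩
    rw [hLm] at hlower
    rw [hL1, hL0] at hv
    linarith
  · obtain ⟨e0, he0⟩ := Function.ne_iff.1 hd2
    have hstrict : ∑ e, m2 e ^ (1 + α)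
        < (1/2 : ℝ) * (∑ e, p₁.2 e ^ (1 + α)) + (1/2 : ℝ) * (∑ e, p₀.2 e ^ (1 + α)) := by
      rw [Finset.mul_sum, Finset.mul_sum, ← Finset.sum_add_distrib]
      exact Finset.sum_lt_sum (fun e _ => hBle e) ⟨e0, Finset.mem_univ e0, hBlt e0 he0⟩
    rw [hLm] at hlower
    rw [hL1, hL0] at hv
    linarith


lemma aux_Lyap_sum (N : Network E F) (α : ℝ) (hα : 0 < α) (nn : F → ℝ) (qq : E → ℝ)
    (hnn : ∀ f, 0 ≤ nn f) :
    N.Lyap α nn qq = ∑ i : F ⊕ E,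
      (Sum.elim (fun f => N.μ f * N.μ f / N.ν f) (fun _ => (1:ℝ)) i) ^ α
        * (Sum.elim (fun f => nn f / N.μ f) qq i) ^ (1 + α) := by
  rw [Fintype.sum_sum_type]
  simp only [Sum.elim_inl, Sum.elim_inr, Real.one_rpow, one_mul]
  unfold Network.Lyap
  congr 1
  refine Finset.sum_congr rfl fun f _ => ?_
  have := aux_coef α (N.μ f) (N.ν f) (nn f) hα (N.hμ0 f) (N.hν f) (hnn f)
  simp only [Network.rho]
  exact this.symm

lemma aux_cost_sum (N : Network E F) (nn : F → ℝ) (qq : E → ℝ) :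
    N.cost nn qq = ∑ i : F ⊕ E, (Sum.elim (fun f => nn f / N.μ f) qq i) := by
  rw [Fintype.sum_sum_type]
  simp [Network.cost]

end AuxNet


/-- Near-optimality of invariant states: there is a function
`β(α) → 0` as `α → 0⁺`, depending only on `μ`, `ν`, `|E|`, `|F|`, such that for
every critically loaded network with these parameters, every `α ∈ (0,∞)∖{1}`,
and every fixed point `(n*,q*)` of the lifting map,
`c(n*,q*) ≤ (1 + β(α)) c*(n*,q*)`. -/
theorem invariant_state_near_optimal
    {E F : Type*} [Fintype E] [Fintype F] [DecidableEq E]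
    (μ ν : F → ℝ) (hμ0 : ∀ f, 0 < μ f) (hμ1 : ∀ f, μ f < 1) (hν : ∀ f, 0 < ν f) :
    ∃ β : ℝ → ℝ, (∀ α, 0 ≤ β α) ∧
      Filter.Tendsto β (nhdsWithin 0 (Set.Ioi 0)) (nhds 0) ∧
      ∀ N : Network E F, N.μ = μ → N.ν = ν → N.Leff = 1 →
        ∀ α : ℝ, 0 < α → α ≠ 1 →
        ∀ (nstar : F → ℝ) (qstar : E → ℝ),
          (∀ f, 0 ≤ nstar f) → (∀ e, 0 ≤ qstar e) →
          N.lift α (nstar, qstar) = (nstar, qstar) →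
          N.cost nstar qstar ≤ (1 + β α) * N.effCost nstar qstar := by
  classical
  set sFin : Finset ℝ := insert (1:ℝ) (Finset.univ.image fun f : F => μ f * μ f / ν f)
    with hsFin
  have hsne : sFin.Nonempty := ⟨1, Finset.mem_insert_self _ _⟩
  set cLo := sFin.min' hsne with hcLo
  set cHi := sFin.max' hsne with hcHi
  have hLo_pos : 0 < cLo := by
    rw [hcLo, Finset.lt_min'_iff]
    intro x hx
    rw [hsFin, Finset.mem_insert] at hx
    rcases hx with rfl | hx
    · norm_num
    · obtain ⟨f, _, rfl⟩ := Finset.mem_image.1 hx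
      have := hμ0 f; have := hν f
      positivity
  have hLo1 : cLo ≤ 1 := Finset.min'_le _ _ (Finset.mem_insert_self _ _)
  have hHi1 : (1:ℝ) ≤ cHi := Finset.le_max' _ _ (Finset.mem_insert_self _ _)
  have hmem : ∀ f, μ f * μ f / ν f ∈ sFin := fun f => by
    rw [hsFin]
    exact Finset.mem_insert_of_mem (Finset.mem_image_of_mem _ (Finset.mem_univ f))
  have hLof : ∀ f, cLo ≤ μ f * μ f / ν f := fun f => Finset.min'_le sFin _ (hmem f)
  have hHif : ∀ f, μ f * μ f / ν f ≤ cHi := fun f => Finset.le_max' sFin _ (hmem f)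
  set D : ℝ := (Fintype.card (F ⊕ E) : ℝ) + 1 with hD
  have hD1 : (1:ℝ) ≤ D := by
    rw [hD]; have : (0:ℝ) ≤ (Fintype.card (F ⊕ E) : ℝ) := by positivity
    linarith
  set K := D * cHi / cLo with hK
  have hK1 : (1:ℝ) ≤ K := by
    rw [hK, le_div_iff₀ hLo_pos, one_mul]
    calc cLo ≤ 1 := hLo1
      _ ≤ D * cHi := by nlinarith
  have hK0 : (0:ℝ) < K := lt_of_lt_of_le one_pos hK1
  refine ⟨fun t => K ^ |t| - 1, ?_, ?_, ?_⟩
  · intro t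
    show (0:ℝ) ≤ K ^ |t| - 1
    have h := Real.rpow_le_rpow_of_exponent_le hK1 (abs_nonneg t)
    rw [Real.rpow_zero] at h
    linarith
  · have hc : ContinuousAt (fun t : ℝ => K ^ |t| - 1) 0 := by
      have h1 : ContinuousAt (fun u : ℝ => K ^ u) (|(0:ℝ)|) :=
        Real.continuousAt_const_rpow hK0.ne'
      exact ((h1.comp continuous_abs.continuousAt).sub continuousAt_const)
    have h0 : K ^ |(0:ℝ)| - 1 = 0 := by
      simp [Real.rpow_zero]
    have := hc.tendsto.mono_left (nhdsWithin_le_nhds (s := Set.Ioi (0:ℝ)))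
    rwa [h0] at this
  · intro N hμN hνN _ α hα _ nstar qstar hns hqs hfix
    subst hμN
    subst hνN
    have hEU := aux_existsUnique N α hα nstar qstar hns hqs
    have hopt : N.bALGDOpt α nstar qstar (nstar, qstar) := by
      unfold Network.lift at hfix
      rw [dif_pos hEU] at hfix
      exact hfix ▸ hEU.choose_spec.1
    have hfeas := hopt.1
    have hmin := hopt.2
    have hKα : (0:ℝ) < K ^ α := Real.rpow_pos_of_pos hK0 α
    -- per-feasible-point cost bound
    have hcost : ∀ p', N.bALGDFeas nstar qstar p' →
        N.cost nstar qstar ≤ K ^ α * N.cost p'.1 p'.2 := by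
      intro p' hp'
      have hLy : N.Lyap α nstar qstar ≤ N.Lyap α p'.1 p'.2 := hmin p' hp'
      rw [aux_Lyap_sum N α hα nstar qstar hns,
        aux_Lyap_sum N α hα p'.1 p'.2 hp'.1] at hLy
      have hkey := aux_key_ineq (a := cLo) (b := cHi) (d := D) hα hLo_pos
        (Sum.elim (fun f => N.μ f * N.μ f / N.ν f) (fun _ => (1:ℝ)))
        (Sum.elim (fun f => nstar f / N.μ f) qstar)
        (Sum.elim (fun f => p'.1 f / N.μ f) p'.2)
        (fun i => by rcases i with f | e
                     · exact hLof f
                     · exact hLo1)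
        (fun i => by rcases i with f | e
                     · exact hHif f
                     · exact hHi1)
        (fun i => by rcases i with f | e
                     · exact div_nonneg (hns f) (N.hμ0 f).le
                     · exact hqs e)
        (fun i => by rcases i with f | e
                     · exact div_nonneg (hp'.1 f) (N.hμ0 f).le
                     · exact hp'.2.1 e)
        (by rw [hD]; linarith)
        (lt_of_lt_of_le zero_lt_one hHi1)
        (by rw [← hK]; exact hK1)
        hLy
      rw [aux_cost_sum N nstar qstar, aux_cost_sum N p'.1 p'.2]
      rw [← hK] at hkey
      exact hkey
    -- conclude via sInf
    have hlow : N.cost nstar qstar / K ^ α ≤ N.effCost nstar qstar := by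
      refine le_csInf ⟨N.cost nstar qstar, (nstar, qstar), hfeas, rfl⟩ ?_
      rintro v ⟨p', hp', rfl⟩
      rw [div_le_iff₀ hKα]
      calc N.cost nstar qstar ≤ K ^ α * N.cost p'.1 p'.2 := hcost p' hp'
        _ = N.cost p'.1 p'.2 * K ^ α := mul_comm _ _
    have hfinal : N.cost nstar qstar ≤ K ^ α * N.effCost nstar qstar := by
      have := (div_le_iff₀ hKα).1 hlow
      linarith [this]
    have habs : |α| = α := abs_of_pos hα
    calc N.cost nstar qstar ≤ K ^ α * N.effCost nstar qstar := hfinal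
      _ = (1 + (K ^ |α| - 1)) * N.effCost nstar qstar := by rw [habs]; ring
end

section
/- Suppose the system is critically loaded (Leff(ρ) = 1) and that the set CR*(ρ) of extreme critical virtual resources is a singleton {ζ}; let v := Ξᵀζ ∈ ℝ₊^ℰ (note v ≠ 0). Then the balance factor satisfies γ(ρ) = (min_{e∈ℰ} v_e)/(max_{e∈ℰ} v_e). -/
open Matrix Filter

section BalanceAux

variable {E F : Type*} [Fintype E] [Fintype F] [DecidableEq E]

lemma matpow_entry_nonneg (A : Matrix E E ℝ) (hA : ∀ e e', 0 ≤ A e e') (k : ℕ) :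
    ∀ e e', 0 ≤ (A ^ k) e e' := by
  induction k with
  | zero =>
    intro e e'
    rw [pow_zero]
    by_cases h : e = e' <;> simp [Matrix.one_apply, h]
  | succ k ih =>
    intro e e'
    rw [pow_succ, Matrix.mul_apply]
    exact Finset.sum_nonneg fun j _ => mul_nonneg (ih e j) (hA j e')

lemma Xi_entry_nonneg (N : Network E F) : ∀ e e', 0 ≤ N.Xi e e' := by
  obtain ⟨m, hm⟩ := N.hRnil
  have hpow : N.R.transpose ^ m = 0 := by
    rw [← Matrix.transpose_pow, hm, Matrix.transpose_zero]
  have hXi : N.Xi = ∑ k ∈ Finset.range m, N.R.transpose ^ k := by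
    show (1 - N.R.transpose)⁻¹ = _
    apply Matrix.inv_eq_right_inv
    have h := mul_geom_sum N.R.transpose m
    have h2 := congrArg Neg.neg h
    rw [← neg_mul, neg_sub] at h2
    rw [h2, neg_sub, hpow, sub_zero]
  intro e e'
  rw [hXi, Matrix.sum_apply]
  refine Finset.sum_nonneg fun k _ => matpow_entry_nonneg _ (fun a b => ?_) k e e'
  rcases N.hR01 b a with h | h <;> simp [Matrix.transpose_apply, h]

lemma workload_formula (N : Network E F) (ζ : E → ℝ) (n : F → ℝ) (q : E → ℝ) :
    N.workload ζ n q = ∑ e, (N.Xi.transpose *ᵥ ζ) e * q e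
      + ∑ f, (N.Xi.transpose *ᵥ ζ) (N.iota f) * (n f / N.μ f) := by
  have h1 : ∀ x : E → ℝ, ∑ e, ζ e * (N.Xi *ᵥ x) e
      = ∑ e, (N.Xi.transpose *ᵥ ζ) e * x e := by
    intro x
    simp only [Matrix.mulVec, dotProduct, Matrix.transpose_apply,
      Finset.mul_sum, Finset.sum_mul]
    rw [Finset.sum_comm]
    refine Finset.sum_congr rfl fun e _ => Finset.sum_congr rfl fun e' _ => by ring
  show ∑ e, ζ e * (N.Xi *ᵥ (q + N.Gam *ᵥ fun f => n f / N.μ f)) e = _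
  rw [h1]
  have h2 : ∀ e, (N.Xi.transpose *ᵥ ζ) e * (q + N.Gam *ᵥ fun f => n f / N.μ f) e
      = (N.Xi.transpose *ᵥ ζ) e * q e
        + (N.Xi.transpose *ᵥ ζ) e * ((N.Gam *ᵥ fun f => n f / N.μ f) e) := by
    intro e; simp only [Pi.add_apply]; ring
  rw [Finset.sum_congr rfl fun e _ => h2 e, Finset.sum_add_distrib]
  congr 1
  simp only [Network.Gam, Matrix.mulVec, dotProduct, Matrix.of_apply,
    Finset.mul_sum]
  rw [Finset.sum_comm]
  refine Finset.sum_congr rfl fun f _ => ?_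
  rw [Finset.sum_eq_single (N.iota f)]
  · simp
  · intro b _ hb; simp [Ne.symm hb]
  · simp

end BalanceAux

/-- If the set of extreme critical virtual resources is a
singleton `{ζ}`, then the balance factor equals
`(min_e v_e)/(max_e v_e)` where `v = Ξᵀζ`. -/
theorem balance_factor_single_resource
    {E F : Type*} [Fintype E] [Fintype F] [DecidableEq E] [Nonempty E]
    (N : Network E F) (hcrit : N.Leff = 1)
    (ζ : E → ℝ) (hsingle : N.CRstar = {ζ})
    (hv : N.Xi.transpose *ᵥ ζ ≠ 0) :
    N.balance =
      (Finset.univ.inf' Finset.univ_nonempty (N.Xi.transpose *ᵥ ζ)) /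
        (Finset.univ.sup' Finset.univ_nonempty (N.Xi.transpose *ᵥ ζ)) := by
  classical
  set v : E → ℝ := N.Xi.transpose *ᵥ ζ with hvdef
  have hζstar : ζ ∈ N.CRstar := by rw [hsingle]; rfl
  have hζmem : ζ ∈ N.CR := extremePoints_subset hζstar
  have hζ0 : ∀ e, 0 ≤ ζ e := hζmem.1.1
  have hv0 : ∀ e, 0 ≤ v e := by
    intro e
    simp only [hvdef, Matrix.mulVec, dotProduct, Matrix.transpose_apply]
    exact Finset.sum_nonneg fun e' _ => mul_nonneg (Xi_entry_nonneg N e' e) (hζ0 e')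
  set M := Finset.univ.sup' Finset.univ_nonempty v with hMdef
  set m := Finset.univ.inf' Finset.univ_nonempty v with hmdef
  have hMpos : 0 < M := by
    obtain ⟨e, he⟩ := Function.ne_iff.mp hv
    have h1 : 0 < v e := lt_of_le_of_ne (hv0 e) (Ne.symm he)
    exact h1.trans_le (Finset.le_sup' v (Finset.mem_univ e))
  have hm0 : 0 ≤ m := Finset.le_inf' _ _ fun e _ => hv0 e
  have hmle : ∀ e, m ≤ v e := fun e => Finset.inf'_le v (Finset.mem_univ e)
  have hleM : ∀ e, v e ≤ M := fun e => Finset.le_sup' v (Finset.mem_univ e)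
  obtain ⟨emin, -, hemin⟩ := Finset.exists_mem_eq_inf' Finset.univ_nonempty v
  obtain ⟨emax, -, hemax⟩ := Finset.exists_mem_eq_sup' Finset.univ_nonempty v
  have hμpos := N.hμ0
  -- lower bound for every element of the set
  have hlb : ∀ x ∈ { x | ∃ (n : F → ℝ) (q : E → ℝ) (p : (F → ℝ) × (E → ℝ)),
      (∀ f, 0 ≤ n f) ∧ (∀ e, 0 ≤ q e) ∧ N.bALGDFeas n q p ∧ N.cost n q = 1 ∧
      x = N.cost p.1 p.2 }, m / M ≤ x := by
    rintro x ⟨n, q, p, hn, hq, hfeas, hcost, rfl⟩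
    have hwle : N.workload ζ n q ≤ N.workload ζ p.1 p.2 := hfeas.2.2 ζ hζstar
    have hw1 : m ≤ N.workload ζ n q := by
      rw [workload_formula]
      calc m = m * N.cost n q := by rw [hcost, mul_one]
        _ = m * ∑ f, n f / N.μ f + m * ∑ e, q e := by
            rw [Network.cost, mul_add]
        _ ≤ ∑ f, v (N.iota f) * (n f / N.μ f) + ∑ e, v e * q e := by
            refine add_le_add ?_ ?_
            · rw [Finset.mul_sum]
              exact Finset.sum_le_sum fun f _ => mul_le_mul_of_nonneg_right
                (hmle _) (div_nonneg (hn f) (hμpos f).le)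
            · rw [Finset.mul_sum]
              exact Finset.sum_le_sum fun e _ =>
                mul_le_mul_of_nonneg_right (hmle e) (hq e)
        _ = ∑ e, v e * q e + ∑ f, v (N.iota f) * (n f / N.μ f) := by ring
    have hw2 : N.workload ζ p.1 p.2 ≤ M * N.cost p.1 p.2 := by
      rw [workload_formula]
      calc ∑ e, v e * p.2 e + ∑ f, v (N.iota f) * (p.1 f / N.μ f)
          ≤ ∑ e, M * p.2 e + ∑ f, M * (p.1 f / N.μ f) := by
            refine add_le_add ?_ ?_
            · exact Finset.sum_le_sum fun e _ =>
                mul_le_mul_of_nonneg_right (hleM e) (hfeas.2.1 e)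
            · exact Finset.sum_le_sum fun f _ => mul_le_mul_of_nonneg_right
                (hleM _) (div_nonneg (hfeas.1 f) (hμpos f).le)
        _ = M * N.cost p.1 p.2 := by
            rw [Network.cost, mul_add, Finset.mul_sum, Finset.mul_sum]; ring
    rw [div_le_iff₀ hMpos]
    calc m ≤ N.workload ζ p.1 p.2 := hw1.trans hwle
      _ ≤ M * N.cost p.1 p.2 := hw2
      _ = N.cost p.1 p.2 * M := mul_comm _ _
  -- membership of m / M
  have hmem : m / M ∈ { x | ∃ (n : F → ℝ) (q : E → ℝ) (p : (F → ℝ) × (E → ℝ)),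
      (∀ f, 0 ≤ n f) ∧ (∀ e, 0 ≤ q e) ∧ N.bALGDFeas n q p ∧ N.cost n q = 1 ∧
      x = N.cost p.1 p.2 } := by
    refine ⟨0, (fun e => if e = emin then 1 else 0),
      (0, fun e => if e = emax then m / M else 0), fun f => le_refl 0,
      fun e => by positivity, ⟨fun f => le_refl 0, fun e => by positivity, ?_⟩, ?_, ?_⟩
    · intro ζ' hζ'
      rw [hsingle] at hζ'
      rw [Set.mem_singleton_iff] at hζ'
      subst hζ'
      rw [workload_formula, workload_formula]
      have e1 : ∑ e, v e * (if e = emin then (1:ℝ) else 0) = v emin := by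
        rw [Finset.sum_eq_single emin] <;> simp +contextual
      have e2 : ∑ e, v e * (if e = emax then m / M else 0) = v emax * (m / M) := by
        rw [Finset.sum_eq_single emax] <;> simp +contextual
      have e3 : ∀ g : F → ℝ, ∑ f, v (N.iota f) * ((0:F → ℝ) f / N.μ f) = 0 := by
        intro g; simp
      simp only [Pi.zero_apply, zero_div, mul_zero, Finset.sum_const_zero, add_zero]
      rw [e1, e2, ← hemin, ← hemax, mul_comm, div_mul_cancel₀ _ hMpos.ne']
    · rw [Network.cost]
      simp [Finset.sum_ite_eq', zero_div]
    · rw [Network.cost]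
      simp [Finset.sum_ite_eq', zero_div]
  show sInf _ = m / M
  exact le_antisymm (csInf_le ⟨m / M, hlb⟩ hmem) (le_csInf ⟨m / M, hmem⟩ hlb)
end
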